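/- Under the paired matrix Gaussian model, for all 1 ≤ i', j' ≤ p, 1 ≤ l_1, l_2 ≤ q, and every k, the cross-sample error covariance factorizes: Cov(ε^{(1)}_{k,i',l_1}, ε^{(2)}_{k,j',l_2}) = P_{T_{1,2},l_1,l_2} · Ω_{S_1,i',·} Σ_{S_{1,2}} Ω_{S_2,·,j'} / (ω_{S_1,i',i'} ω_{S_2,j',j'}); equivalently, corr(ε^{(1)}_{k,i',l_1}, ε^{(2)}_{k,j',l_2}) = P_{T_{1,2},l_1,l_2} · ρ_{S_{1,2},i',j'}. -/

import Mathlib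

open Filter Matrix
open scoped BigOperators ENNReal

noncomputable section

/-- A family of real random variables is centered jointly Gaussian with covariance matrix `C`
if every linear combination has the centered one-dimensional Gaussian law with the
corresponding variance. -/
def IsCenteredGaussianFamily {Ω : Type*} [MeasurableSpace Ω] (μ : MeasureTheory.Measure Ω)
    {ι : Type*} [Fintype ι] (Z : ι → Ω → ℝ) (C : Matrix ι ι ℝ) : Prop :=
  ∀ a : ι → ℝ,
    μ.map (fun ω => ∑ i, a i * Z i ω)
      = ProbabilityTheory.gaussianReal 0 (Real.toNNReal (∑ i, ∑ j, a i * C i j * a j))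

/-- The covariance matrix of the stacked vector `(vec X⁽¹⁾, vec X⁽²⁾)` in the paired
matrix Gaussian model, with diagonal blocks `Σ_{S_t} ⊗ Σ_{T_t}` and off-diagonal blocks
`Σ_{S_{1,2}} ⊗ Σ_{T_{1,2}}` (and its transpose). -/
def pairCov {p q : ℕ} (S1 S2 S12 : Matrix (Fin p) (Fin p) ℝ)
    (T1 T2 T12 : Matrix (Fin q) (Fin q) ℝ) :
    Matrix (Fin 2 × Fin p × Fin q) (Fin 2 × Fin p × Fin q) ℝ :=
  Matrix.of fun a b =>
    if a.1 = 0 then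
      (if b.1 = 0 then S1 a.2.1 b.2.1 * T1 a.2.2 b.2.2
       else S12 a.2.1 b.2.1 * T12 a.2.2 b.2.2)
    else
      (if b.1 = 0 then S12 b.2.1 a.2.1 * T12 b.2.2 a.2.2
       else S2 a.2.1 b.2.1 * T2 a.2.2 b.2.2)

/-- Covariance of two real random variables. -/
def cov {Ω : Type*} [MeasurableSpace Ω] (μ : MeasureTheory.Measure Ω) (f g : Ω → ℝ) : ℝ :=
  ∫ ω, (f ω - ∫ x, f x ∂μ) * (g ω - ∫ x, g x ∂μ) ∂μ

/-- Pearson correlation of two real random variables. -/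
def corr {Ω : Type*} [MeasurableSpace Ω] (μ : MeasureTheory.Measure Ω) (f g : Ω → ℝ) : ℝ :=
  cov μ f g / Real.sqrt (ProbabilityTheory.variance f μ * ProbabilityTheory.variance g μ)

/-- Squared Frobenius norm of a matrix. -/
def frobSq {m : ℕ} (A : Matrix (Fin m) (Fin m) ℝ) : ℝ := ∑ i, ∑ j, (A i j) ^ 2

/-- Matrix 1-norm `max_j ∑_i |a_{i,j}|`. -/
def L1norm {m : ℕ} (A : Matrix (Fin m) (Fin m) ℝ) : ℝ := ⨆ j, ∑ i, |A i j|

/-- Spectral (operator) norm of a matrix. -/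
def specNorm {m : ℕ} (A : Matrix (Fin m) (Fin m) ℝ) : ℝ :=
  ⨆ v : {v : Fin m → ℝ // v ⬝ᵥ v ≤ 1}, Real.sqrt (A.mulVec v ⬝ᵥ A.mulVec v)

/-- Standard normal cumulative distribution function. -/
def Phi (x : ℝ) : ℝ := ((ProbabilityTheory.gaussianReal 0 1) (Set.Iic x)).toReal

/-- The square root of a positive semidefinite matrix (the definition `Matrix.PosSemidef.sqrt`
of the older Mathlib, which has since been removed). -/
def Matrix.PosSemidef.sqrt {n : Type*} [Fintype n] [DecidableEq n]
    {A : Matrix n n ℝ} (hA : A.PosSemidef) : Matrix n n ℝ :=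
  hA.1.eigenvectorUnitary.1 * diagonal (Real.sqrt ∘ hA.1.eigenvalues)
    * (star hA.1.eigenvectorUnitary : Matrix n n ℝ)

/-- The paired matrix Gaussian model: `n` i.i.d. pairs of `p × q` random matrices whose
stacked vectors are centered Gaussian with separable (Kronecker) covariance structure. -/
structure PairedModel where
  n : ℕ
  p : ℕ
  q : ℕ
  npos : 0 < n
  ppos : 0 < p
  qpos : 0 < q
  Ω : Type
  [mΩ : MeasurableSpace Ω]
  μ : MeasureTheory.Measure Ω
  probμ : MeasureTheory.IsProbabilityMeasure μ
  SigS : Fin 2 → Matrix (Fin p) (Fin p) ℝ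
  SigT : Fin 2 → Matrix (Fin q) (Fin q) ℝ
  SigS12 : Matrix (Fin p) (Fin p) ℝ
  SigT12 : Matrix (Fin q) (Fin q) ℝ
  hSigS : ∀ t, (SigS t).PosDef
  hSigT : ∀ t, (SigT t).PosDef
  hSig : (pairCov (SigS 0) (SigS 1) SigS12 (SigT 0) (SigT 1) SigT12).PosSemidef
  X : Fin n → Fin 2 → Ω → Matrix (Fin p) (Fin q) ℝ
  measX : ∀ k t i l, Measurable fun ω => X k t ω i l
  gaussX : ∀ k, IsCenteredGaussianFamily μ
      (fun tl ω => X k tl.1 ω tl.2.1 tl.2.2)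
      (pairCov (SigS 0) (SigS 1) SigS12 (SigT 0) (SigT 1) SigT12)
  iidX : ProbabilityTheory.iIndepFun
      (fun k ω (tl : Fin 2 × Fin p × Fin q) => X k tl.1 ω tl.2.1 tl.2.2) μ
  identX : ∀ k k' : Fin n, ProbabilityTheory.IdentDistrib
      (fun ω (tl : Fin 2 × Fin p × Fin q) => X k tl.1 ω tl.2.1 tl.2.2)
      (fun ω (tl : Fin 2 × Fin p × Fin q) => X k' tl.1 ω tl.2.1 tl.2.2) μ μ

attribute [instance] PairedModel.mΩ PairedModel.probμ

namespace PairedModel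

variable (M : PairedModel)

/-- `Σ_{T_t}^{-1/2}`. -/
def invSqrtT (t : Fin 2) : Matrix (Fin M.q) (Fin M.q) ℝ := ((M.hSigT t).posSemidef.sqrt)⁻¹

/-- `P_{T_{1,2}} = Σ_{T_1}^{-1/2} Σ_{T_{1,2}} Σ_{T_2}^{-1/2}`. -/
def PT12 : Matrix (Fin M.q) (Fin M.q) ℝ := M.invSqrtT 0 * M.SigT12 * M.invSqrtT 1

/-- Spatial precision matrices `Ω_{S_t} = Σ_{S_t}⁻¹`. -/
def ΩS (t : Fin 2) : Matrix (Fin M.p) (Fin M.p) ℝ := (M.SigS t)⁻¹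

/-- The whitened observations `Y_k^{(t)} = X_k^{(t)} Σ_{T_t}^{-1/2}`. -/
def Y (k : Fin M.n) (t : Fin 2) (ω : M.Ω) : Matrix (Fin M.p) (Fin M.q) ℝ :=
  M.X k t ω * M.invSqrtT t

/-- Population regression coefficients `β_i^{(t)}`, as `β^{(t)}_{i,j} = -ω_{S_t,i,j}/ω_{S_t,i,i}`
for `j ≠ i` (the value at `j = i` is irrelevant). -/
def β (t : Fin 2) (i j : Fin M.p) : ℝ := -(M.ΩS t i j) / M.ΩS t i i

/-- Regression errors `ε^{(t)}_{k,i,l} = Y^{(t)}_{k,i,l} − Σ_{j ≠ i} β^{(t)}_{i,j} Y^{(t)}_{k,j,l}`. -/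
def ε (k : Fin M.n) (t : Fin 2) (i : Fin M.p) (l : Fin M.q) (ω : M.Ω) : ℝ :=
  M.Y k t ω i l - ∑ j ∈ Finset.univ.erase i, M.β t i j * M.Y k t ω j l

/-- `r^{(t)}_{i,j} = ω_{S_t,i,j}/(ω_{S_t,i,i} ω_{S_t,j,j})`. -/
def r (t : Fin 2) (i j : Fin M.p) : ℝ := M.ΩS t i j / (M.ΩS t i i * M.ΩS t j j)

/-- `ρ^{(t)}_{i,j} = r^{(t)}_{i,j}/(r^{(t)}_{i,i} r^{(t)}_{j,j})^{1/2}`. -/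
def ρ (t : Fin 2) (i j : Fin M.p) : ℝ := M.r t i j / Real.sqrt (M.r t i i * M.r t j j)

/-- Partial correlations `ρ_{S_t,i,j} = ω_{S_t,i,j}/(ω_{S_t,i,i} ω_{S_t,j,j})^{1/2}`. -/
def ρS (t : Fin 2) (i j : Fin M.p) : ℝ :=
  M.ΩS t i j / Real.sqrt (M.ΩS t i i * M.ΩS t j j)

/-- `U^{(t)}_{i,j}`. -/
def U (t : Fin 2) (i j : Fin M.p) (ω : M.Ω) : ℝ :=
  (1 / (M.n * M.q : ℝ)) * ∑ k, ∑ l,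
    (M.ε k t i l ω * M.ε k t j l ω - ∫ ω', M.ε k t i l ω' * M.ε k t j l ω' ∂M.μ)

/-- `Ũ^{(t)}_{i,j} = (r^{(t)}_{i,j} − U^{(t)}_{i,j})/(r^{(t)}_{i,i} r^{(t)}_{j,j})^{1/2}`. -/
def Utilde (t : Fin 2) (i j : Fin M.p) (ω : M.Ω) : ℝ :=
  (M.r t i j - M.U t i j ω) / Real.sqrt (M.r t i i * M.r t j j)

/-- `θ^{(t)}_{i,j} = Var(Ũ^{(t)}_{i,j})`. -/
def θ (t : Fin 2) (i j : Fin M.p) : ℝ := ProbabilityTheory.variance (M.Utilde t i j) M.μ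

/-- `Θ_{i,j} = Var(Ũ^{(1)}_{i,j} − Ũ^{(2)}_{i,j})`. -/
def Θ (i j : Fin M.p) : ℝ :=
  ProbabilityTheory.variance (fun ω => M.Utilde 0 i j ω - M.Utilde 1 i j ω) M.μ

/-- `ρ_{S_{1,2},i,j} = (r^{(1)}_{i,i} r^{(2)}_{j,j})^{1/2} · Ω_{S_1,i,·} Σ_{S_{1,2}} Ω_{S_2,·,j}`. -/
def ρS12 (i j : Fin M.p) : ℝ :=
  Real.sqrt (M.r 0 i i * M.r 1 j j) * ∑ a, ∑ b, M.ΩS 0 i a * M.SigS12 a b * M.ΩS 1 b j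

/-- Assumption (A1), with constants `c0, c1, c2`: the eigenvalues of the spatial and temporal
precision matrices lie in `[c0⁻¹, c0]`; the scaled operator norms of `P_{T_{1,2}}` and
`Σ_{S_{1,2}}` are bounded by `c1`; and `|tr(P_{T_{1,2}}) tr(Σ_{S_{1,2}})|/(pq) ≥ c2`. -/
def A1 (c0 c1 c2 : ℝ) : Prop :=
  (∀ t : Fin 2, ∀ v : Fin M.p → ℝ,
      c0⁻¹ * (v ⬝ᵥ v) ≤ v ⬝ᵥ (M.ΩS t).mulVec v ∧ v ⬝ᵥ (M.ΩS t).mulVec v ≤ c0 * (v ⬝ᵥ v)) ∧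
  (∀ t : Fin 2, ∀ v : Fin M.q → ℝ,
      c0⁻¹ * (v ⬝ᵥ v) ≤ v ⬝ᵥ ((M.SigT t)⁻¹).mulVec v ∧
        v ⬝ᵥ ((M.SigT t)⁻¹).mulVec v ≤ c0 * (v ⬝ᵥ v)) ∧
  (∀ v : Fin M.q → ℝ,
      |Matrix.trace M.SigS12| / M.p * Real.sqrt (M.PT12.mulVec v ⬝ᵥ M.PT12.mulVec v)
        ≤ c1 * Real.sqrt (v ⬝ᵥ v)) ∧
  (∀ v : Fin M.p → ℝ,
      |Matrix.trace M.PT12| / M.q * Real.sqrt (M.SigS12.mulVec v ⬝ᵥ M.SigS12.mulVec v)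
        ≤ c1 * Real.sqrt (v ⬝ᵥ v)) ∧
  c2 ≤ |Matrix.trace M.PT12 * Matrix.trace M.SigS12| / (M.p * M.q)

end PairedModel


namespace PairedModel

variable (M : PairedModel)

/-- Sample means `Ȳ^{(t)}_i` of the whitened data. -/
def Ybar (t : Fin 2) (i : Fin M.p) (ω : M.Ω) : ℝ :=
  (1 / (M.n * M.q : ℝ)) * ∑ k, ∑ l, M.Y k t ω i l

/-- Residuals `ε̂^{(t)}_{k,i,l}` built from estimated regression coefficients `b`. -/
def εhat (b : Fin 2 → Fin M.p → M.Ω → Fin M.p → ℝ) (k : Fin M.n) (t : Fin 2)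
    (i : Fin M.p) (l : Fin M.q) (ω : M.Ω) : ℝ :=
  M.Y k t ω i l - M.Ybar t i ω
    - ∑ j ∈ Finset.univ.erase i, b t i ω j * (M.Y k t ω j l - M.Ybar t j ω)

/-- `r̃^{(t)}_{i,j}`, the sample covariance of the residuals. -/
def rtil (b : Fin 2 → Fin M.p → M.Ω → Fin M.p → ℝ) (t : Fin 2) (i j : Fin M.p) (ω : M.Ω) : ℝ :=
  (1 / (M.n * M.q : ℝ)) * ∑ k, ∑ l, M.εhat b k t i l ω * M.εhat b k t j l ω

/-- Bias-corrected estimator `r̂^{(t)}_{i,j}` (for `i = j` it is `r̃^{(t)}_{i,i}`, for `i ≠ j`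
it is the bias-corrected formula, used for `i < j`). -/
def rhat (b : Fin 2 → Fin M.p → M.Ω → Fin M.p → ℝ) (t : Fin 2) (i j : Fin M.p) (ω : M.Ω) : ℝ :=
  if i = j then M.rtil b t i i ω
  else -(M.rtil b t i j ω + M.rtil b t i i ω * b t i ω j + M.rtil b t j j ω * b t j ω i)

/-- `θ̂^{(t)}_{i,j}`. -/
def θhat (b : Fin 2 → Fin M.p → M.Ω → Fin M.p → ℝ) (t : Fin 2) (i j : Fin M.p) (ω : M.Ω) : ℝ :=
  (1 / (M.n * M.q : ℝ)) * (1 + (b t i ω j) ^ 2 * M.rhat b t i i ω / M.rhat b t j j ω)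

/-- `ϱ̂^{(1,2)}_{i,j}`. -/
def ϱhat (b : Fin 2 → Fin M.p → M.Ω → Fin M.p → ℝ) (i j : Fin M.p) (ω : M.Ω) : ℝ :=
  ((1 / (M.n * M.q : ℝ)) * ∑ k, ∑ l, M.εhat b k 0 i l ω * M.εhat b k 1 j l ω)
    / Real.sqrt (M.rhat b 0 i i ω * M.rhat b 1 j j ω)

/-- The variance-corrected estimator `Θ̂_{i,j}` (temporal covariances known). -/
def Θhat (b : Fin 2 → Fin M.p → M.Ω → Fin M.p → ℝ) (i j : Fin M.p) (ω : M.Ω) : ℝ :=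
  M.θhat b 0 i j ω + M.θhat b 1 i j ω
    - (2 / (M.n * M.q : ℝ))
      * (M.ϱhat b i i ω * M.ϱhat b j j ω + M.ϱhat b i j ω * M.ϱhat b j i ω)
      * ((M.q : ℝ) * frobSq M.PT12 / (Matrix.trace M.PT12) ^ 2)

/-- `ρ̂_{S_t,i,j}`. -/
def ρShat (b : Fin 2 → Fin M.p → M.Ω → Fin M.p → ℝ) (t : Fin 2) (i j : Fin M.p) (ω : M.Ω) : ℝ :=
  M.rhat b t i j ω / Real.sqrt (M.rhat b t i i ω * M.rhat b t j j ω)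

/-- The paired-test statistic `W_{i,j}` (temporal covariances known). -/
def W (b : Fin 2 → Fin M.p → M.Ω → Fin M.p → ℝ) (i j : Fin M.p) (ω : M.Ω) : ℝ :=
  (M.ρShat b 0 i j ω - M.ρShat b 1 i j ω) / Real.sqrt (M.Θhat b i j ω)

section DataDriven

variable (R : Fin 2 → M.Ω → Matrix (Fin M.q) (Fin M.q) ℝ)
variable (b : Fin 2 → Fin M.p → M.Ω → Fin M.p → ℝ)

/-- Data-driven whitened observations `Y_k^{(t,d)} = X_k^{(t)} Σ̂_{T_t}^{-1/2}`, where
`R t ω` is the (random) estimator `Σ̂_{T_t}^{-1/2}`. -/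
def Yd (k : Fin M.n) (t : Fin 2) (ω : M.Ω) : Matrix (Fin M.p) (Fin M.q) ℝ :=
  M.X k t ω * R t ω

/-- Sample means of the data-driven whitened data. -/
def Ybard (t : Fin 2) (i : Fin M.p) (ω : M.Ω) : ℝ :=
  (1 / (M.n * M.q : ℝ)) * ∑ k, ∑ l, M.Yd R k t ω i l

/-- Data-driven residuals `ε̂^{(t,d)}_{k,i,l}`. -/
def εhatd (k : Fin M.n) (t : Fin 2) (i : Fin M.p) (l : Fin M.q) (ω : M.Ω) : ℝ :=
  M.Yd R k t ω i l - M.Ybard R t i ω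
    - ∑ j ∈ Finset.univ.erase i, b t i ω j * (M.Yd R k t ω j l - M.Ybard R t j ω)

/-- `r̃^{(t,d)}_{i,j}`. -/
def rtild (t : Fin 2) (i j : Fin M.p) (ω : M.Ω) : ℝ :=
  (1 / (M.n * M.q : ℝ)) * ∑ k, ∑ l, M.εhatd R b k t i l ω * M.εhatd R b k t j l ω

/-- `r̂^{(t,d)}_{i,j}`. -/
def rhatd (t : Fin 2) (i j : Fin M.p) (ω : M.Ω) : ℝ :=
  if i = j then M.rtild R b t i i ω
  else -(M.rtild R b t i j ω + M.rtild R b t i i ω * b t i ω j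
          + M.rtild R b t j j ω * b t j ω i)

/-- `θ̂^{(t,d)}_{i,j}`. -/
def θhatd (t : Fin 2) (i j : Fin M.p) (ω : M.Ω) : ℝ :=
  (1 / (M.n * M.q : ℝ)) * (1 + (b t i ω j) ^ 2 * M.rhatd R b t i i ω / M.rhatd R b t j j ω)

/-- `ϱ̂^{(1,2,d)}_{i,j}`. -/
def ϱhatd (i j : Fin M.p) (ω : M.Ω) : ℝ :=
  ((1 / (M.n * M.q : ℝ)) * ∑ k, ∑ l, M.εhatd R b k 0 i l ω * M.εhatd R b k 1 j l ω)
    / Real.sqrt (M.rhatd R b 0 i i ω * M.rhatd R b 1 j j ω)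

/-- Row-pooled means of the data-driven whitened data. -/
def YbarRowd (t : Fin 2) (l : Fin M.q) (ω : M.Ω) : ℝ :=
  (1 / (M.n * M.p : ℝ)) * ∑ k, ∑ i, M.Yd R k t ω i l

/-- The pooled estimator `P̂^{(d)}_{T_{1,2}}`. -/
def Phatd (ω : M.Ω) : Matrix (Fin M.q) (Fin M.q) ℝ :=
  Matrix.of fun l1 l2 =>
    (1 / (M.n * M.p : ℝ)) * ∑ k, ∑ i,
      (M.Yd R k 0 ω i l1 - M.YbarRowd R 0 l1 ω) * (M.Yd R k 1 ω i l2 - M.YbarRowd R 1 l2 ω)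

/-- The variance-corrected estimator `Θ̂^{(d)}_{i,j}` (temporal covariances unknown). -/
def Θhatd (i j : Fin M.p) (ω : M.Ω) : ℝ :=
  M.θhatd R b 0 i j ω + M.θhatd R b 1 i j ω
    - (2 / (M.n * M.q : ℝ))
      * (M.ϱhatd R b i i ω * M.ϱhatd R b j j ω + M.ϱhatd R b i j ω * M.ϱhatd R b j i ω)
      * ((M.q : ℝ) * frobSq (M.Phatd R ω) / (Matrix.trace (M.Phatd R ω)) ^ 2)

/-- `ρ̂_{S_t,i,j}` in the data-driven case. -/
def ρShatd (t : Fin 2) (i j : Fin M.p) (ω : M.Ω) : ℝ :=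
  M.rhatd R b t i j ω / Real.sqrt (M.rhatd R b t i i ω * M.rhatd R b t j j ω)

/-- The paired-test statistic `W_{i,j}` in the data-driven case. -/
def Wd (i j : Fin M.p) (ω : M.Ω) : ℝ :=
  (M.ρShatd R b 0 i j ω - M.ρShatd R b 1 i j ω) / Real.sqrt (M.Θhatd R b i j ω)

/-- The column-precision matrices `(ω̂^{(t,d)}_{l,i,j}) = [Cov(X^{(t)} Σ̂_{T_t}^{-1/2})]⁻¹`. -/
def Ωhatd (t : Fin 2) (l : Fin M.q) : Matrix (Fin M.p) (Fin M.p) ℝ :=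
  (Matrix.of fun i j =>
    cov M.μ (fun ω => M.Yd R ⟨0, M.npos⟩ t ω i l) (fun ω => M.Yd R ⟨0, M.npos⟩ t ω j l))⁻¹

/-- The sparsity level `s_{p,q}`. -/
def sPQ : ℕ :=
  ⨆ t : Fin 2, ⨆ l : Fin M.q, ⨆ i : Fin M.p,
    ∑ j, max (if M.ΩS t i j ≠ 0 then 1 else 0) (if M.Ωhatd R t l i j ≠ 0 then 1 else 0)

/-- `log max(p, q, n)`. -/
def logMaxPQN : ℝ := Real.log (max (max M.p M.q) M.n)

/-- The rate `r^{(1)}_{n,p,q,t}` of assumption (A7). -/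
def rate1 (t : Fin 2) : ℝ :=
  ((M.sPQ R : ℝ) * M.q * (M.logMaxPQN) ^ ((3 : ℝ) / 2) * (L1norm (M.ΩS t)) ^ 2)⁻¹

/-- The rate `r^{(2)}_{n,p,q,t}` of assumption (A7). -/
def rate2 (t : Fin 2) : ℝ :=
  ((M.n * M.q : ℝ) * (M.sPQ R : ℝ) ^ 2 * Real.log M.p * (M.logMaxPQN) ^ 2) ^ (-(1 : ℝ) / 4)
    * ((M.q : ℝ) * (L1norm (M.ΩS t)) ^ 2)⁻¹

/-- `min_t min(r^{(1)}_{n,p,q,t}, r^{(2)}_{n,p,q,t})`. -/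
def rateMin : ℝ :=
  min (min (M.rate1 R 0) (M.rate2 R 0)) (min (M.rate1 R 1) (M.rate2 R 1))

end DataDriven

/-- Mean of the true errors. -/
def εbar (t : Fin 2) (i : Fin M.p) (ω : M.Ω) : ℝ :=
  (1 / (M.n * M.q : ℝ)) * ∑ k, ∑ l, M.ε k t i l ω

/-- `σ̂^{(t)}_{i,i,ε}`, the empirical variance of the true errors. -/
def σhatε (t : Fin 2) (i : Fin M.p) (ω : M.Ω) : ℝ :=
  (1 / (M.n * M.q : ℝ)) * ∑ k, ∑ l, (M.ε k t i l ω - M.εbar t i ω) ^ 2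

/-- `R̃^{(t)}_{i,j}`, the empirical covariance of the true errors. -/
def Rtil (t : Fin 2) (i j : Fin M.p) (ω : M.Ω) : ℝ :=
  (1 / (M.n * M.q : ℝ)) * ∑ k, ∑ l,
    (M.ε k t i l ω - M.εbar t i ω) * (M.ε k t j l ω - M.εbar t j ω)

/-- The set of true nulls `H₀`. -/
def H0fin : Finset (Fin M.p × Fin M.p) :=
  Finset.univ.filter fun pr => pr.1 < pr.2 ∧ M.ρS 0 pr.1 pr.2 = M.ρS 1 pr.1 pr.2

/-- `ℓ₀ = |H₀|`. -/
def ell0 : ℕ := M.H0fin.card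

/-- All pairs `(i, j)` with `i < j`. -/
def allPairs : Finset (Fin M.p × Fin M.p) :=
  Finset.univ.filter fun pr => pr.1 < pr.2

/-- `ℓ = (p² − p)/2` as a real number. -/
def ellR : ℝ := ((M.p : ℝ) ^ 2 - M.p) / 2

/-- The set `A_τ` of pairs with non-negligible precision entries. -/
def Atau (τ : ℝ) : Finset (Fin M.p × Fin M.p) :=
  Finset.univ.filter fun pr => pr.1 < pr.2 ∧
    ((Real.log M.p) ^ (-(2 : ℝ) - τ) ≤ |M.ΩS 0 pr.1 pr.2| ∨
      (Real.log M.p) ^ (-(2 : ℝ) - τ) ≤ |M.ΩS 1 pr.1 pr.2|)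

/-- Cardinality of the signal set `S(η)` of assumption (A4). -/
def Scard (η : ℝ) : ℕ :=
  (Finset.univ.filter fun pr : Fin M.p × Fin M.p => pr.1 < pr.2 ∧
    (Real.log M.p) ^ ((1 : ℝ) / 2 + η)
      ≤ |M.ρS 0 pr.1 pr.2 - M.ρS 1 pr.1 pr.2| / Real.sqrt (M.Θ pr.1 pr.2)).card

/-- Number of rejections at threshold `h` for a generic statistic `Wf`. -/
def rejections (Wf : Fin M.p → Fin M.p → M.Ω → ℝ) (h : ℝ) (ω : M.Ω) : ℕ :=
  (M.allPairs.filter fun pr => h ≤ |Wf pr.1 pr.2 ω|).card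

/-- False discovery proportion at threshold `h`. -/
def FDP (Wf : Fin M.p → Fin M.p → M.Ω → ℝ) (h : ℝ) (ω : M.Ω) : ℝ :=
  ((M.H0fin.filter fun pr => h ≤ |Wf pr.1 pr.2 ω|).card : ℝ)
    / max (M.rejections Wf h ω : ℝ) 1

/-- Estimated false discovery proportion `F̂DP(h)`. -/
def FDPhat (Wf : Fin M.p → Fin M.p → M.Ω → ℝ) (h : ℝ) (ω : M.Ω) : ℝ :=
  2 * (1 - Phi h) * (((M.p : ℝ) ^ 2 - M.p) / 2) / max (M.rejections Wf h ω : ℝ) 1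

open Classical in
/-- The data-driven threshold `ĥ_α`. -/
def hhat (Wf : Fin M.p → Fin M.p → M.Ω → ℝ) (α : ℝ) (ω : M.Ω) : ℝ :=
  if h : {h : ℝ | 0 ≤ h ∧ h ≤ 2 * Real.sqrt (Real.log M.p) ∧ M.FDPhat Wf h ω ≤ α}.Nonempty
  then sInf {h : ℝ | 0 ≤ h ∧ h ≤ 2 * Real.sqrt (Real.log M.p) ∧ M.FDPhat Wf h ω ≤ α}
  else 2 * Real.sqrt (Real.log M.p)

/-- `FDP(ĥ_α)`. -/
def FDPsel (Wf : Fin M.p → Fin M.p → M.Ω → ℝ) (α : ℝ) (ω : M.Ω) : ℝ :=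
  M.FDP Wf (M.hhat Wf α ω) ω

/-- `FDR(ĥ_α) = E[FDP(ĥ_α)]`. -/
def FDRsel (Wf : Fin M.p → Fin M.p → M.Ω → ℝ) (α : ℝ) : ℝ :=
  ∫ ω, M.FDPsel Wf α ω ∂M.μ

/-- `Z_{k,m,l}` for the pair `pr = (i_m, j_m)`. -/
def Zr (k : Fin M.n) (pr : Fin M.p × Fin M.p) (l : Fin M.q) (ω : M.Ω) : ℝ :=
  (M.ε k 1 pr.1 l ω * M.ε k 1 pr.2 l ω - M.ε k 0 pr.1 l ω * M.ε k 0 pr.2 l ω)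
    - ∫ ω', (M.ε k 1 pr.1 l ω' * M.ε k 1 pr.2 l ω'
        - M.ε k 0 pr.1 l ω' * M.ε k 0 pr.2 l ω') ∂M.μ

/-- The truncation level `τ_n = 32 log(p + nq)`. -/
def τn : ℝ := 32 * Real.log ((M.p : ℝ) + M.n * M.q)

/-- `Θ_m = Var(ε^{(1)}_{k,i_m,l} ε^{(1)}_{k,j_m,l} − ε^{(2)}_{k,i_m,l} ε^{(2)}_{k,j_m,l})`. -/
def Θm (pr : Fin M.p × Fin M.p) : ℝ :=
  ProbabilityTheory.variance (fun ω =>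
    M.ε ⟨0, M.npos⟩ 0 pr.1 ⟨0, M.qpos⟩ ω * M.ε ⟨0, M.npos⟩ 0 pr.2 ⟨0, M.qpos⟩ ω
      - M.ε ⟨0, M.npos⟩ 1 pr.1 ⟨0, M.qpos⟩ ω * M.ε ⟨0, M.npos⟩ 1 pr.2 ⟨0, M.qpos⟩ ω) M.μ

/-- Truncated `Z`. -/
def Ztrunc (k : Fin M.n) (pr : Fin M.p × Fin M.p) (l : Fin M.q) (ω : M.Ω) : ℝ :=
  if |M.Zr k pr l ω| ≤ M.τn then M.Zr k pr l ω else 0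

/-- `Ẑ_{k,m,l}`, the centered truncation of `Z_{k,m,l}`. -/
def Zhat (k : Fin M.n) (pr : Fin M.p × Fin M.p) (l : Fin M.q) (ω : M.Ω) : ℝ :=
  M.Ztrunc k pr l ω - ∫ ω', M.Ztrunc k pr l ω' ∂M.μ

/-- `V_m`. -/
def Vm (pr : Fin M.p × Fin M.p) (ω : M.Ω) : ℝ :=
  (Real.sqrt ((M.n * M.q : ℝ) * M.Θm pr))⁻¹ * ∑ k, ∑ l, M.Zr k pr l ω

/-- `V̂_m`. -/
def Vhatm (pr : Fin M.p × Fin M.p) (ω : M.Ω) : ℝ :=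
  (Real.sqrt ((M.n * M.q : ℝ) * M.Θm pr))⁻¹ * ∑ k, ∑ l, M.Zhat k pr l ω

/-- Row-pooled means of the raw data. -/
def XbarRow (t : Fin 2) (l : Fin M.q) (ω : M.Ω) : ℝ :=
  (1 / (M.n * M.p : ℝ)) * ∑ k, ∑ i, M.X k t ω i l

/-- The pooled sample cross-temporal covariance `Σ̂_{T_{1,2}}`. -/
def ShatT12 (ω : M.Ω) : Matrix (Fin M.q) (Fin M.q) ℝ :=
  Matrix.of fun l1 l2 =>
    (1 / (M.n * M.p : ℝ)) * ∑ k, ∑ i,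
      (M.X k 0 ω i l1 - M.XbarRow 0 l1 ω) * (M.X k 1 ω i l2 - M.XbarRow 1 l2 ω)

end PairedModel

/-- `F ν = o_p(a ν)` along a sequence of models. -/
def SeqLittleOP (M : ℕ → PairedModel) (F : ∀ ν, (M ν).Ω → ℝ) (a : ℕ → ℝ) : Prop :=
  ∀ ε : ℝ, 0 < ε →
    Tendsto (fun ν => (M ν).μ {ω | ε * |a ν| < |F ν ω|}) atTop (nhds 0)

/-- `F ν = O_p(a ν)` along a sequence of models. -/
def SeqBigOP (M : ℕ → PairedModel) (F : ∀ ν, (M ν).Ω → ℝ) (a : ℕ → ℝ) : Prop :=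
  ∀ ε : ℝ, 0 < ε → ∃ C : ℝ, 0 < C ∧
    ∀ᶠ ν in atTop, (M ν).μ {ω | C * |a ν| < |F ν ω|} ≤ ENNReal.ofReal ε

/-- The dimensions diverge along the sequence of models. -/
def DimsTendsto (M : ℕ → PairedModel) : Prop :=
  Tendsto (fun ν => (M ν).n) atTop atTop ∧ Tendsto (fun ν => (M ν).p) atTop atTop ∧
    Tendsto (fun ν => (M ν).q) atTop atTop

/-- Assumption (A2): `|A_τ ∩ H₀| = o(p^ν)` for every `ν > 0`. -/
def A2seq (M : ℕ → PairedModel) (τ : ℝ) : Prop :=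
  ∀ e : ℝ, 0 < e →
    Tendsto (fun k => ((((M k).Atau τ) ∩ (M k).H0fin).card : ℝ) / ((M k).p : ℝ) ^ e)
      atTop (nhds 0)

/-- Assumption (A3): `log p = o((nq)^{1/5})` and `q = o(np/(log p)²)`. -/
def A3seq (M : ℕ → PairedModel) : Prop :=
  Tendsto (fun ν => Real.log ((M ν).p) / (((M ν).n * (M ν).q : ℝ)) ^ ((1 : ℝ) / 5))
      atTop (nhds 0) ∧
  Tendsto (fun ν => ((M ν).q : ℝ) * (Real.log ((M ν).p)) ^ 2 / (((M ν).n : ℝ) * (M ν).p))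
      atTop (nhds 0)

/-- Assumption (A4): the number of strong signals is at least
`[((8π)^{1/2} α)⁻¹ + δ](log log p)^{1/2}`. -/
def A4seq (M : ℕ → PairedModel) (α : ℝ) : Prop :=
  ∃ η δ : ℝ, 0 < η ∧ 0 < δ ∧ ∀ ν,
    (1 / (Real.sqrt (8 * Real.pi) * α) + δ) * Real.sqrt (Real.log (Real.log ((M ν).p)))
      ≤ ((M ν).Scard η : ℝ)

/-- Assumption (A5)/(A6): rates of the regression coefficient estimators. -/
def A5seq (M : ℕ → PairedModel)
    (b : ∀ ν, Fin 2 → Fin (M ν).p → (M ν).Ω → Fin (M ν).p → ℝ) : Prop :=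
  ∀ t : Fin 2,
    SeqLittleOP M
      (fun ν ω => ⨆ i, ∑ j ∈ Finset.univ.erase i, |b ν t i ω j - (M ν).β t i j|)
      (fun ν => ((M ν).logMaxPQN)⁻¹) ∧
    SeqLittleOP M
      (fun ν ω => ⨆ i, Real.sqrt (∑ j ∈ Finset.univ.erase i, (b ν t i ω j - (M ν).β t i j) ^ 2))
      (fun ν => (((M ν).n * (M ν).q : ℝ) * Real.log ((M ν).p)) ^ (-(1 : ℝ) / 4))

/-- Assumption (A7): rate of the estimator of `Σ_{T_t}^{-1/2}`. -/
def A7seq (M : ℕ → PairedModel)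
    (R : ∀ ν, Fin 2 → (M ν).Ω → Matrix (Fin (M ν).q) (Fin (M ν).q) ℝ) : Prop :=
  ∃ c : ℝ, 0 < c ∧ ∃ rr : ℕ → ℝ,
    (∀ t : Fin 2, SeqLittleOP M
        (fun ν ω => ⨆ l1, ⨆ l2, |R ν t ω l1 l2 - c * (M ν).invSqrtT t l1 l2|) rr) ∧
    Tendsto (fun ν => rr ν / (M ν).rateMin (R ν)) atTop (nhds 0)


/-! ### Auxiliary lemmas for statement_2 -/

section Aux2
open MeasureTheory ProbabilityTheory Real
open scoped NNReal

-- Gaussian integral computations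
lemma aux_integrable_sq_mul_exp {b : ℝ} (hb : 0 < b) :
    Integrable (fun x : ℝ => x ^ 2 * Real.exp (-b * x ^ 2)) := by
  have h := integrable_rpow_mul_exp_neg_mul_sq hb (s := 2) (by norm_num)
  refine h.congr ?_
  filter_upwards with x
  rw [show (2:ℝ) = ((2:ℕ):ℝ) by norm_num, Real.rpow_natCast]

lemma aux_integral_sq_mul_exp {b : ℝ} (hb : 0 < b) :
    ∫ x : ℝ, x ^ 2 * Real.exp (-b * x ^ 2) = Real.sqrt (Real.pi / b) / (2 * b) := by
  have hderiv : ∀ x : ℝ, HasDerivAt (fun x : ℝ => x * Real.exp (-b * x ^ 2))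
      (Real.exp (-b * x ^ 2) - 2 * b * (x ^ 2 * Real.exp (-b * x ^ 2))) x := by
    intro x
    have h1 : HasDerivAt (fun x : ℝ => -b * x ^ 2) (-b * (2 * x)) x := by
      simpa using ((hasDerivAt_pow 2 x).const_mul (-b))
    have h3 := (hasDerivAt_id x).mul h1.exp
    refine h3.congr_deriv ?_
    simp [id]
    ring
  have hint' : Integrable (fun x : ℝ =>
      Real.exp (-b * x ^ 2) - 2 * b * (x ^ 2 * Real.exp (-b * x ^ 2))) :=
    (integrable_exp_neg_mul_sq hb).sub ((aux_integrable_sq_mul_exp hb).const_mul _)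
  have h0 := integral_eq_zero_of_hasDerivAt_of_integrable hderiv hint'
    (integrable_mul_exp_neg_mul_sq hb)
  rw [integral_sub (integrable_exp_neg_mul_sq hb)
    ((aux_integrable_sq_mul_exp hb).const_mul _), integral_gaussian,
    MeasureTheory.integral_const_mul, sub_eq_zero] at h0
  rw [eq_div_iff (by positivity), mul_comm, ← h0]

lemma aux_integral_id_mul_exp {b : ℝ} (hb : 0 < b) :
    ∫ x : ℝ, x * Real.exp (-b * x ^ 2) = 0 := by
  have hderiv : ∀ x : ℝ, HasDerivAt (fun x : ℝ => -(2*b)⁻¹ * Real.exp (-b * x ^ 2))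
      (x * Real.exp (-b * x ^ 2)) x := by
    intro x
    have h1 : HasDerivAt (fun x : ℝ => -b * x ^ 2) (-b * (2 * x)) x := by
      simpa using ((hasDerivAt_pow 2 x).const_mul (-b))
    have h3 := h1.exp.const_mul (-(2*b)⁻¹)
    refine h3.congr_deriv ?_
    have hb' : b ≠ 0 := hb.ne'
    field_simp
  exact integral_eq_zero_of_hasDerivAt_of_integrable hderiv
    (integrable_mul_exp_neg_mul_sq hb)
    ((integrable_exp_neg_mul_sq hb).const_mul _)

lemma aux_gaussianReal_eq_withDensity {v : ℝ≥0} (hv : v ≠ 0) (m : ℝ) :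
    gaussianReal m v = MeasureTheory.volume.withDensity
      (fun x => ((Real.toNNReal (gaussianPDFReal m v x) : ℝ≥0) : ENNReal)) := by
  rw [gaussianReal_of_var_ne_zero _ hv]
  rfl

lemma aux_integral_gaussianReal {v : ℝ≥0} (hv : v ≠ 0) (g : ℝ → ℝ) :
    ∫ x, g x ∂(gaussianReal 0 v) = ∫ x, gaussianPDFReal 0 v x * g x := by
  rw [aux_gaussianReal_eq_withDensity hv,
    integral_withDensity_eq_integral_smul (measurable_gaussianPDFReal 0 v).real_toNNReal]
  congr 1; funext x
  rw [NNReal.smul_def, Real.coe_toNNReal _ (gaussianPDFReal_nonneg 0 v x), smul_eq_mul]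

lemma aux_integrable_gaussianReal_iff {v : ℝ≥0} (hv : v ≠ 0) (g : ℝ → ℝ) :
    Integrable g (gaussianReal 0 v) ↔
      Integrable (fun x => gaussianPDFReal 0 v x * g x) := by
  rw [aux_gaussianReal_eq_withDensity hv,
    integrable_withDensity_iff_integrable_smul (measurable_gaussianPDFReal 0 v).real_toNNReal]
  constructor <;> intro h <;> refine h.congr ?_ <;> filter_upwards with x <;>
    rw [NNReal.smul_def, Real.coe_toNNReal _ (gaussianPDFReal_nonneg 0 v x), smul_eq_mul]

lemma aux_bpos {v : ℝ≥0} (hv : v ≠ 0) : 0 < ((2:ℝ) * v)⁻¹ := by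
  have h : (0:ℝ) < v := by exact_mod_cast zero_lt_iff.mpr hv
  positivity

lemma aux_pdf_eq {v : ℝ≥0} (x : ℝ) :
    gaussianPDFReal 0 v x = (Real.sqrt (2 * Real.pi * v))⁻¹ *
      Real.exp (-(((2:ℝ)*v)⁻¹) * x ^ 2) := by
  rw [gaussianPDFReal]
  congr 1
  ring

lemma aux_integrable_dirac {f : ℝ → ℝ} (hf : Measurable f) (a : ℝ) :
    Integrable f (Measure.dirac a) := by
  refine (integrable_const (f a)).congr ?_
  have hs : {x : ℝ | f a = f x} = f ⁻¹' {f a} := by ext x; simp [eq_comm]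
  exact (MeasureTheory.ae_dirac_iff (hs ▸ hf (measurableSet_singleton _))).mpr rfl

lemma aux_integrable_id_gaussianReal (v : ℝ≥0) :
    Integrable (fun x : ℝ => x) (gaussianReal 0 v) := by
  by_cases hv : v = 0
  · rw [hv, gaussianReal_zero_var]; exact aux_integrable_dirac measurable_id 0
  · rw [aux_integrable_gaussianReal_iff hv]
    refine (((integrable_mul_exp_neg_mul_sq (aux_bpos hv)).const_mul
      ((Real.sqrt (2 * Real.pi * v))⁻¹)).congr ?_)
    filter_upwards with x
    rw [aux_pdf_eq]; ring

lemma aux_integrable_sq_gaussianReal (v : ℝ≥0) :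
    Integrable (fun x : ℝ => x ^ 2) (gaussianReal 0 v) := by
  by_cases hv : v = 0
  · rw [hv, gaussianReal_zero_var]
    exact aux_integrable_dirac (by measurability) 0
  · rw [aux_integrable_gaussianReal_iff hv]
    refine (((aux_integrable_sq_mul_exp (aux_bpos hv)).const_mul
      ((Real.sqrt (2 * Real.pi * v))⁻¹)).congr ?_)
    filter_upwards with x
    rw [aux_pdf_eq]; ring

lemma aux_integral_id_gaussianReal (v : ℝ≥0) :
    ∫ x, x ∂(gaussianReal 0 v) = 0 := by
  by_cases hv : v = 0
  · rw [hv, gaussianReal_zero_var, integral_dirac]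
  · rw [aux_integral_gaussianReal hv]
    have : ∀ x : ℝ, gaussianPDFReal 0 v x * x
        = (Real.sqrt (2 * Real.pi * v))⁻¹ * (x * Real.exp (-((2*(v:ℝ))⁻¹) * x ^ 2)) := by
      intro x; rw [aux_pdf_eq]; ring
    simp_rw [this]
    rw [MeasureTheory.integral_const_mul, aux_integral_id_mul_exp (aux_bpos hv), mul_zero]

lemma aux_integral_sq_gaussianReal (v : ℝ≥0) :
    ∫ x, x ^ 2 ∂(gaussianReal 0 v) = v := by
  by_cases hv : v = 0
  · rw [hv, gaussianReal_zero_var, integral_dirac]; simp [hv]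
  · rw [aux_integral_gaussianReal hv]
    have : ∀ x : ℝ, gaussianPDFReal 0 v x * x ^ 2
        = (Real.sqrt (2 * Real.pi * v))⁻¹ * (x ^ 2 * Real.exp (-((2*(v:ℝ))⁻¹) * x ^ 2)) := by
      intro x; rw [aux_pdf_eq]; ring
    simp_rw [this]
    rw [MeasureTheory.integral_const_mul, aux_integral_sq_mul_exp (aux_bpos hv)]
    have hvpos : (0:ℝ) < v := by exact_mod_cast zero_lt_iff.mpr hv
    have h1 : Real.sqrt (Real.pi / ((2*(v:ℝ))⁻¹)) = Real.sqrt (2 * Real.pi * v) := by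
      congr 1; field_simp
    rw [h1]
    have h2 : Real.sqrt (2 * Real.pi * v) ≠ 0 := by positivity
    field_simp

-- linear combinations of a centered Gaussian family
section Lin
variable {Ω : Type*} [MeasurableSpace Ω] {μ : MeasureTheory.Measure Ω}
variable {ι : Type*} [Fintype ι] {Z : ι → Ω → ℝ} {C : Matrix ι ι ℝ}

/-- quadratic form associated to `C`. -/
def auxQf (C : Matrix ι ι ℝ) (a b : ι → ℝ) : ℝ := ∑ i, ∑ j, a i * C i j * b j

lemma aux_measurable_lin (hm : ∀ i, Measurable (Z i)) (a : ι → ℝ) :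
    Measurable (fun ω => ∑ i, a i * Z i ω) := by
  exact Finset.measurable_sum _ fun i _ => (hm i).const_mul _

lemma aux_integral_lin (hm : ∀ i, Measurable (Z i)) (hG : IsCenteredGaussianFamily μ Z C)
    (a : ι → ℝ) : ∫ ω, (∑ i, a i * Z i ω) ∂μ = 0 := by
  have h := hG a
  have hmap := MeasureTheory.integral_map (μ := μ) (aux_measurable_lin hm a).aemeasurable
    (f := fun x : ℝ => x) aestronglyMeasurable_id
  rw [← hmap, h, aux_integral_id_gaussianReal]

lemma aux_integrable_sq_lin (hm : ∀ i, Measurable (Z i)) (hG : IsCenteredGaussianFamily μ Z C)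
    (a : ι → ℝ) : Integrable (fun ω => (∑ i, a i * Z i ω) ^ 2) μ := by
  have h := (integrable_map_measure (μ := μ) (g := fun x : ℝ => x ^ 2)
    (f := fun ω => ∑ i, a i * Z i ω)
    (measurable_id.pow_const 2).aestronglyMeasurable (aux_measurable_lin hm a).aemeasurable)
  rw [hG a] at h
  exact h.mp (aux_integrable_sq_gaussianReal _)

lemma aux_integral_sq_lin (hm : ∀ i, Measurable (Z i)) (hG : IsCenteredGaussianFamily μ Z C)
    (a : ι → ℝ) (h0 : 0 ≤ auxQf C a a) :
    ∫ ω, (∑ i, a i * Z i ω) ^ 2 ∂μ = auxQf C a a := by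
  have h := hG a
  have hmap := MeasureTheory.integral_map (μ := μ) (aux_measurable_lin hm a).aemeasurable
    (f := fun x : ℝ => x ^ 2) (measurable_id.pow_const 2).aestronglyMeasurable
  rw [← hmap, h, aux_integral_sq_gaussianReal]
  exact Real.coe_toNNReal _ h0

lemma aux_qf_add_add (hsym : ∀ i j, C i j = C j i) (a b : ι → ℝ) :
    auxQf C (a + b) (a + b) = auxQf C a a + auxQf C b b + 2 * auxQf C a b := by
  simp only [auxQf, Pi.add_apply]
  have : ∀ i j, (a i + b i) * C i j * (a j + b j)
      = a i * C i j * a j + b i * C i j * b j + (a i * C i j * b j + b i * C i j * a j) := by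
    intros; ring
  simp_rw [this, Finset.sum_add_distrib]
  have hsw : ∑ i, ∑ j, b i * C i j * a j = ∑ i, ∑ j, a i * C i j * b j := by
    rw [Finset.sum_comm]
    refine Finset.sum_congr rfl fun i _ => Finset.sum_congr rfl fun j _ => ?_
    rw [hsym j i]; ring
  rw [hsw]; ring

lemma aux_cov_lin [MeasureTheory.IsProbabilityMeasure μ] (hm : ∀ i, Measurable (Z i))
    (hG : IsCenteredGaussianFamily μ Z C)
    (hsym : ∀ i j, C i j = C j i) (hpsd : ∀ c : ι → ℝ, 0 ≤ auxQf C c c) (a b : ι → ℝ) :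
    cov μ (fun ω => ∑ i, a i * Z i ω) (fun ω => ∑ i, b i * Z i ω) = auxQf C a b := by
  have hsum : (fun ω => ∑ i, (a + b) i * Z i ω)
      = fun ω => (∑ i, a i * Z i ω) + (∑ i, b i * Z i ω) := by
    funext ω; simp [add_mul, Finset.sum_add_distrib]
  have hia := aux_integral_lin hm hG a
  have hib := aux_integral_lin hm hG b
  have key : ∀ ω, (∑ i, a i * Z i ω) * (∑ i, b i * Z i ω)
      = ((∑ i, (a + b) i * Z i ω) ^ 2 - (∑ i, a i * Z i ω) ^ 2
          - (∑ i, b i * Z i ω) ^ 2) / 2 := by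
    intro ω
    have h := congrFun hsum ω
    rw [h]; ring
  rw [cov]
  simp only [hia, hib, sub_zero]
  calc ∫ ω, (∑ i, a i * Z i ω) * (∑ i, b i * Z i ω) ∂μ
      = ∫ ω, ((∑ i, (a + b) i * Z i ω) ^ 2 - (∑ i, a i * Z i ω) ^ 2
          - (∑ i, b i * Z i ω) ^ 2) / 2 ∂μ := by
        exact integral_congr_ae (Filter.Eventually.of_forall key)
    _ = auxQf C a b := by
        have hint1 : Integrable (fun ω => (∑ i, (a + b) i * Z i ω) ^ 2
            - (∑ i, a i * Z i ω) ^ 2) μ :=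
          (aux_integrable_sq_lin hm hG (a + b)).sub (aux_integrable_sq_lin hm hG a)
        rw [integral_div, integral_sub hint1 (aux_integrable_sq_lin hm hG b),
          integral_sub (aux_integrable_sq_lin hm hG (a+b)) (aux_integrable_sq_lin hm hG a),
          aux_integral_sq_lin hm hG (a+b) (hpsd _), aux_integral_sq_lin hm hG a (hpsd _),
          aux_integral_sq_lin hm hG b (hpsd _), aux_qf_add_add hsym]
        ring

lemma aux_variance_lin [MeasureTheory.IsProbabilityMeasure μ] (hm : ∀ i, Measurable (Z i))
    (hG : IsCenteredGaussianFamily μ Z C) (a : ι → ℝ) (h0 : 0 ≤ auxQf C a a) :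
    ProbabilityTheory.variance (fun ω => ∑ i, a i * Z i ω) μ = auxQf C a a := by
  have hmem : MeasureTheory.MemLp (fun ω => ∑ i, a i * Z i ω) 2 μ := by
    rw [MeasureTheory.memLp_two_iff_integrable_sq (aux_measurable_lin hm a).aestronglyMeasurable]
    exact aux_integrable_sq_lin hm hG a
  rw [ProbabilityTheory.variance_eq_sub hmem, aux_integral_lin hm hG a]
  simp only [Pi.pow_apply]
  rw [aux_integral_sq_lin hm hG a h0]
  ring

end Lin

-- matrix helpers
lemma aux_psd_sqrt_herm {n : Type*} [Fintype n] [DecidableEq n] {A : Matrix n n ℝ}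
    (hA : A.PosSemidef) : hA.sqrt.IsHermitian := by
  unfold Matrix.IsHermitian Matrix.PosSemidef.sqrt
  rw [conjTranspose_mul, conjTranspose_mul, diagonal_conjTranspose]
  simp [Matrix.mul_assoc, star_trivial, Matrix.star_eq_conjTranspose,
    Matrix.conjTranspose_eq_transpose_of_trivial]

lemma aux_psd_sqrt_mul_self {n : Type*} [Fintype n] [DecidableEq n] {A : Matrix n n ℝ}
    (hA : A.PosSemidef) : hA.sqrt * hA.sqrt = A := by
  have hU : (star hA.1.eigenvectorUnitary : Matrix n n ℝ) * hA.1.eigenvectorUnitary.1 = 1 :=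
    Matrix.UnitaryGroup.star_mul_self _
  have hD : diagonal (Real.sqrt ∘ hA.1.eigenvalues) * diagonal (Real.sqrt ∘ hA.1.eigenvalues)
      = diagonal (RCLike.ofReal ∘ hA.1.eigenvalues) := by
    rw [diagonal_mul_diagonal]
    congr 1; funext i
    simp [Real.mul_self_sqrt (hA.eigenvalues_nonneg i)]
  conv_rhs => rw [hA.1.spectral_theorem]
  unfold Matrix.PosSemidef.sqrt
  rw [Unitary.conjStarAlgAut_apply, ← hD]
  simp only [Matrix.mul_assoc]
  rw [← Matrix.mul_assoc (star _ : Matrix n n ℝ) _ _, hU, Matrix.one_mul]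

lemma aux_diag_pos {m : ℕ} {A : Matrix (Fin m) (Fin m) ℝ} (hA : A.PosDef) (i : Fin m) :
    0 < A i i := by
  exact hA.diag_pos

lemma aux_triple {m : ℕ} (A B C : Matrix (Fin m) (Fin m) ℝ) (i k : Fin m) :
    (A * B * C) i k = ∑ a, ∑ b, A i a * B a b * C b k := by
  simp only [Matrix.mul_apply, Finset.sum_mul]
  rw [Finset.sum_comm]

lemma aux_factor {p q : ℕ} (f : Fin p → Fin p → ℝ) (g : Fin q → Fin q → ℝ) :
    (∑ j, ∑ m, ∑ j'', ∑ m', f j j'' * g m m')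
      = (∑ j, ∑ j'', f j j'') * (∑ m, ∑ m', g m m') := by
  rw [Finset.sum_mul]
  refine Finset.sum_congr rfl fun j _ => ?_
  rw [Finset.sum_comm, Finset.sum_mul]
  refine Finset.sum_congr rfl fun j'' _ => ?_
  simp_rw [← Finset.mul_sum]

namespace PairedModel

variable (M : PairedModel)

lemma aux_omega_posdef (t : Fin 2) : (M.ΩS t).PosDef := (M.hSigS t).inv

lemma aux_omega_pos (t : Fin 2) (i : Fin M.p) : 0 < M.ΩS t i i :=
  aux_diag_pos (M.aux_omega_posdef t) i

lemma aux_omega_sym (t : Fin 2) (a b : Fin M.p) : M.ΩS t a b = M.ΩS t b a := by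
  have h := (M.aux_omega_posdef t).1.apply a b
  rw [star_trivial] at h
  exact h.symm

lemma aux_omega_mul (t : Fin 2) : M.ΩS t * M.SigS t = 1 :=
  Matrix.nonsing_inv_mul _ (M.hSigS t).det_pos.ne'.isUnit

lemma aux_sqrt_isUnit_det (t : Fin 2) : IsUnit ((M.hSigT t).posSemidef.sqrt).det := by
  have h : ((M.hSigT t).posSemidef.sqrt).det * ((M.hSigT t).posSemidef.sqrt).det
      = (M.SigT t).det := by
    rw [← Matrix.det_mul, aux_psd_sqrt_mul_self (M.hSigT t).posSemidef]
  have hd : (M.SigT t).det ≠ 0 := (M.hSigT t).det_pos.ne'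
  have : ((M.hSigT t).posSemidef.sqrt).det ≠ 0 := fun hc => hd (by rw [← h, hc, mul_zero])
  exact this.isUnit

lemma aux_invSqrt_sym (t : Fin 2) (a b : Fin M.q) :
    M.invSqrtT t a b = M.invSqrtT t b a := by
  have h := ((aux_psd_sqrt_herm (M.hSigT t).posSemidef).inv).apply a b
  rw [star_trivial] at h
  exact h.symm

lemma aux_white (t : Fin 2) : M.invSqrtT t * M.SigT t * M.invSqrtT t = 1 := by
  set S := (M.hSigT t).posSemidef.sqrt with hSdef
  have hU := M.aux_sqrt_isUnit_det t
  have h1 : S⁻¹ * (S * S) * S⁻¹ = 1 := by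
    simp only [Matrix.mul_assoc]
    rw [Matrix.mul_nonsing_inv _ hU, Matrix.mul_one, Matrix.nonsing_inv_mul _ hU]
  rw [aux_psd_sqrt_mul_self (M.hSigT t).posSemidef] at h1
  exact h1


/-- coefficient vector expressing `ε` as a linear functional of the stacked data. -/
def auxCoef (t : Fin 2) (i : Fin M.p) (l : Fin M.q) : Fin 2 × Fin M.p × Fin M.q → ℝ :=
  fun x => if x.1 = t then (M.ΩS t i x.2.1 / M.ΩS t i i) * M.invSqrtT t x.2.2 l else 0

lemma aux_eps_lin (k : Fin M.n) (t : Fin 2) (i : Fin M.p) (l : Fin M.q) (ω : M.Ω) :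
    M.ε k t i l ω
      = ∑ x : Fin 2 × Fin M.p × Fin M.q, M.auxCoef t i l x * M.X k x.1 ω x.2.1 x.2.2 := by
  have hY : ∀ j, M.Y k t ω j l = ∑ m, M.X k t ω j m * M.invSqrtT t m l := by
    intro j; rw [Y, Matrix.mul_apply]
  have hR : (∑ x : Fin 2 × Fin M.p × Fin M.q, M.auxCoef t i l x * M.X k x.1 ω x.2.1 x.2.2)
      = ∑ j, (M.ΩS t i j / M.ΩS t i i) * M.Y k t ω j l := by
    rw [Fintype.sum_prod_type]
    rw [Finset.sum_eq_single_of_mem t (Finset.mem_univ t) (by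
      intro a _ ha
      simp [auxCoef, ha])]
    rw [Fintype.sum_prod_type]
    refine Finset.sum_congr rfl fun j _ => ?_
    rw [hY j, Finset.mul_sum]
    refine Finset.sum_congr rfl fun m _ => ?_
    simp only [auxCoef, if_pos rfl, if_true]
    ring
  rw [hR, ε, ← Finset.add_sum_erase Finset.univ
      (fun j => (M.ΩS t i j / M.ΩS t i i) * M.Y k t ω j l) (Finset.mem_univ i),
    div_self (M.aux_omega_pos t i).ne', one_mul, sub_eq_add_neg, ← Finset.sum_neg_distrib]
  congr 1
  refine Finset.sum_congr rfl fun j _ => ?_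
  rw [β, neg_div]
  ring

lemma aux_hsym (x y : Fin 2 × Fin M.p × Fin M.q) :
    pairCov (M.SigS 0) (M.SigS 1) M.SigS12 (M.SigT 0) (M.SigT 1) M.SigT12 x y
      = pairCov (M.SigS 0) (M.SigS 1) M.SigS12 (M.SigT 0) (M.SigT 1) M.SigT12 y x := by
  have h := M.hSig.1.apply x y
  rw [star_trivial] at h
  exact h.symm

lemma aux_hpsd (c : Fin 2 × Fin M.p × Fin M.q → ℝ) :
    0 ≤ auxQf (pairCov (M.SigS 0) (M.SigS 1) M.SigS12 (M.SigT 0) (M.SigT 1) M.SigT12) c c := by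
  have h := M.hSig.dotProduct_mulVec_nonneg c
  simpa [auxQf, dotProduct, Matrix.mulVec, Finset.mul_sum, mul_assoc, star_trivial] using h

lemma aux_temporal_cross (l1 l2 : Fin M.q) :
    ∑ m, ∑ m', M.invSqrtT 0 m l1 * M.SigT12 m m' * M.invSqrtT 1 m' l2 = M.PT12 l1 l2 := by
  rw [PT12, aux_triple]
  refine Finset.sum_congr rfl fun m _ => Finset.sum_congr rfl fun m' _ => ?_
  rw [M.aux_invSqrt_sym 0 m l1]

lemma aux_temporal_diag (t : Fin 2) (l : Fin M.q) :
    ∑ m, ∑ m', M.invSqrtT t m l * M.SigT t m m' * M.invSqrtT t m' l = 1 := by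
  have h : ∑ m, ∑ m', M.invSqrtT t l m * M.SigT t m m' * M.invSqrtT t m' l
      = (M.invSqrtT t * M.SigT t * M.invSqrtT t) l l := (aux_triple _ _ _ _ _).symm
  rw [M.aux_white t, Matrix.one_apply_eq] at h
  rw [← h]
  refine Finset.sum_congr rfl fun m _ => Finset.sum_congr rfl fun m' _ => ?_
  rw [M.aux_invSqrt_sym t m l]

lemma aux_spatial_cross (i' j' : Fin M.p) :
    ∑ j, ∑ j'', (M.ΩS 0 i' j / M.ΩS 0 i' i') * M.SigS12 j j'' * (M.ΩS 1 j' j'' / M.ΩS 1 j' j')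
      = (∑ a, ∑ b, M.ΩS 0 i' a * M.SigS12 a b * M.ΩS 1 b j')
          / (M.ΩS 0 i' i' * M.ΩS 1 j' j') := by
  have key : ∀ j j'', (M.ΩS 0 i' j / M.ΩS 0 i' i') * M.SigS12 j j''
      * (M.ΩS 1 j' j'' / M.ΩS 1 j' j')
      = (M.ΩS 0 i' j * M.SigS12 j j'' * M.ΩS 1 j'' j')
          * (M.ΩS 0 i' i' * M.ΩS 1 j' j')⁻¹ := by
    intro j j''; rw [M.aux_omega_sym 1 j' j'']; ring
  simp_rw [key, ← Finset.sum_mul]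
  rw [div_eq_mul_inv]

lemma aux_spatial_diag (t : Fin 2) (i : Fin M.p) :
    ∑ j, ∑ j'', (M.ΩS t i j / M.ΩS t i i) * M.SigS t j j'' * (M.ΩS t i j'' / M.ΩS t i i)
      = (M.ΩS t i i)⁻¹ := by
  have key : ∀ j j'', (M.ΩS t i j / M.ΩS t i i) * M.SigS t j j'' * (M.ΩS t i j'' / M.ΩS t i i)
      = (M.ΩS t i j * M.SigS t j j'' * M.ΩS t j'' i) * (M.ΩS t i i * M.ΩS t i i)⁻¹ := by
    intro j j''; rw [M.aux_omega_sym t i j'']; ring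
  simp_rw [key, ← Finset.sum_mul]
  have h2 : ∑ j, ∑ j'', M.ΩS t i j * M.SigS t j j'' * M.ΩS t j'' i
      = (M.ΩS t * M.SigS t * M.ΩS t) i i := (aux_triple _ _ _ _ _).symm
  rw [h2, show M.ΩS t * M.SigS t * M.ΩS t = M.ΩS t by rw [M.aux_omega_mul t, Matrix.one_mul]]
  have hne := (M.aux_omega_pos t i).ne'
  field_simp

lemma aux_qf_cross (i' j' : Fin M.p) (l1 l2 : Fin M.q) :
    auxQf (pairCov (M.SigS 0) (M.SigS 1) M.SigS12 (M.SigT 0) (M.SigT 1) M.SigT12)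
      (M.auxCoef 0 i' l1) (M.auxCoef 1 j' l2)
      = (∑ a, ∑ b, M.ΩS 0 i' a * M.SigS12 a b * M.ΩS 1 b j')
          / (M.ΩS 0 i' i' * M.ΩS 1 j' j') * M.PT12 l1 l2 := by
  rw [← M.aux_spatial_cross i' j', ← M.aux_temporal_cross l1 l2, ← aux_factor]
  simp only [auxQf, Fintype.sum_prod_type, Fin.sum_univ_two, auxCoef, pairCov,
    Matrix.of_apply, one_ne_zero, zero_ne_one, if_true, if_false, zero_mul, mul_zero,
    Finset.sum_const_zero, add_zero, zero_add, ite_true, ite_false, reduceIte]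
  refine Finset.sum_congr rfl fun j _ => Finset.sum_congr rfl fun m _ =>
    Finset.sum_congr rfl fun j'' _ => Finset.sum_congr rfl fun m' _ => by ring

lemma aux_qf_diag (t : Fin 2) (i : Fin M.p) (l : Fin M.q) :
    auxQf (pairCov (M.SigS 0) (M.SigS 1) M.SigS12 (M.SigT 0) (M.SigT 1) M.SigT12)
      (M.auxCoef t i l) (M.auxCoef t i l) = (M.ΩS t i i)⁻¹ := by
  have ht : t = 0 ∨ t = 1 := by fin_cases t; exacts [Or.inl rfl, Or.inr rfl]
  rcases ht with rfl | rfl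
  · rw [← mul_one ((M.ΩS 0 i i)⁻¹), ← M.aux_spatial_diag 0 i, ← M.aux_temporal_diag 0 l,
      ← aux_factor]
    simp only [auxQf, Fintype.sum_prod_type, Fin.sum_univ_two, auxCoef, pairCov,
      Matrix.of_apply, one_ne_zero, zero_ne_one, if_true, if_false, zero_mul, mul_zero,
      Finset.sum_const_zero, add_zero, zero_add, ite_true, ite_false, reduceIte]
    refine Finset.sum_congr rfl fun j _ => Finset.sum_congr rfl fun m _ =>
      Finset.sum_congr rfl fun j'' _ => Finset.sum_congr rfl fun m' _ => by ring
  · rw [← mul_one ((M.ΩS 1 i i)⁻¹), ← M.aux_spatial_diag 1 i, ← M.aux_temporal_diag 1 l,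
      ← aux_factor]
    simp only [auxQf, Fintype.sum_prod_type, Fin.sum_univ_two, auxCoef, pairCov,
      Matrix.of_apply, one_ne_zero, zero_ne_one, if_true, if_false, zero_mul, mul_zero,
      Finset.sum_const_zero, add_zero, zero_add, ite_true, ite_false, reduceIte]
    refine Finset.sum_congr rfl fun j _ => Finset.sum_congr rfl fun m _ =>
      Finset.sum_congr rfl fun j'' _ => Finset.sum_congr rfl fun m' _ => by ring

lemma aux_measZ (k : Fin M.n) :
    ∀ x : Fin 2 × Fin M.p × Fin M.q, Measurable (fun ω => M.X k x.1 ω x.2.1 x.2.2) :=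
  fun x => M.measX k x.1 x.2.1 x.2.2

lemma aux_cov_eps (k : Fin M.n) (i' j' : Fin M.p) (l1 l2 : Fin M.q) :
    cov M.μ (M.ε k 0 i' l1) (M.ε k 1 j' l2)
      = (∑ a, ∑ b, M.ΩS 0 i' a * M.SigS12 a b * M.ΩS 1 b j')
          / (M.ΩS 0 i' i' * M.ΩS 1 j' j') * M.PT12 l1 l2 := by
  have h1 : M.ε k 0 i' l1 = fun ω => ∑ x : Fin 2 × Fin M.p × Fin M.q,
      M.auxCoef 0 i' l1 x * M.X k x.1 ω x.2.1 x.2.2 := funext (M.aux_eps_lin k 0 i' l1)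
  have h2 : M.ε k 1 j' l2 = fun ω => ∑ x : Fin 2 × Fin M.p × Fin M.q,
      M.auxCoef 1 j' l2 x * M.X k x.1 ω x.2.1 x.2.2 := funext (M.aux_eps_lin k 1 j' l2)
  rw [h1, h2, aux_cov_lin (M.aux_measZ k) (M.gaussX k) M.aux_hsym M.aux_hpsd,
    M.aux_qf_cross]

lemma aux_var_eps (k : Fin M.n) (t : Fin 2) (i : Fin M.p) (l : Fin M.q) :
    ProbabilityTheory.variance (M.ε k t i l) M.μ = (M.ΩS t i i)⁻¹ := by
  have h1 : M.ε k t i l = fun ω => ∑ x : Fin 2 × Fin M.p × Fin M.q,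
      M.auxCoef t i l x * M.X k x.1 ω x.2.1 x.2.2 := funext (M.aux_eps_lin k t i l)
  rw [h1, aux_variance_lin (M.aux_measZ k) (M.gaussX k) _ (M.aux_hpsd _), M.aux_qf_diag]

end PairedModel

end Aux2


/-- The cross-sample error covariance factorizes into a temporal factor `P_{T_{1,2},l₁,l₂}`
and a spatial factor. -/
theorem statement_2 (M : PairedModel) (i' j' : Fin M.p) (l1 l2 : Fin M.q) (k : Fin M.n) :
    cov M.μ (M.ε k 0 i' l1) (M.ε k 1 j' l2)
        = M.PT12 l1 l2 * (∑ a, ∑ b, M.ΩS 0 i' a * M.SigS12 a b * M.ΩS 1 b j')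
            / (M.ΩS 0 i' i' * M.ΩS 1 j' j') ∧
    corr M.μ (M.ε k 0 i' l1) (M.ε k 1 j' l2) = M.PT12 l1 l2 * M.ρS12 i' j' := by
  have hA := M.aux_omega_pos 0 i'
  have hB := M.aux_omega_pos 1 j'
  have hcov := M.aux_cov_eps k i' j' l1 l2
  constructor
  · rw [hcov]; ring
  · rw [corr, hcov, M.aux_var_eps k 0 i' l1, M.aux_var_eps k 1 j' l2, PairedModel.ρS12]
    have hr0 : M.r 0 i' i' = (M.ΩS 0 i' i')⁻¹ := by rw [PairedModel.r]; field_simp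
    have hr1 : M.r 1 j' j' = (M.ΩS 1 j' j')⁻¹ := by rw [PairedModel.r]; field_simp
    rw [hr0, hr1]
    set Q := ∑ a, ∑ b, M.ΩS 0 i' a * M.SigS12 a b * M.ΩS 1 b j' with hQ
    set s := Real.sqrt ((M.ΩS 0 i' i')⁻¹ * (M.ΩS 1 j' j')⁻¹) with hs
    have hs2 : s * s = (M.ΩS 0 i' i')⁻¹ * (M.ΩS 1 j' j')⁻¹ :=
      Real.mul_self_sqrt (by positivity)
    have hs' : s * s * (M.ΩS 0 i' i' * M.ΩS 1 j' j') = 1 := by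
      rw [hs2]; field_simp
    have hspos : 0 < s := Real.sqrt_pos.mpr (by positivity)
    rw [div_eq_iff hspos.ne', div_mul_eq_mul_div, div_eq_iff (mul_pos hA hB).ne']
    linear_combination (-(M.PT12 l1 l2 * Q)) * hs'

end
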